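/- arXiv:2108.12796 — 2 statements merged into one kernel-verified Lean document; each statement's English description precedes it below -/
import Mathlib

section
/- (Gould–Hsu inverse series relations) Let {a_i} and {b_i} be complex sequences such that the polynomials φ(x;0)=1 and φ(x;n)=∏_{k=0}^{n-1}(a_k + x b_k) are nonzero for all x,n in ℕ₀. If f(n) = ∑_{k=0}^{n} (-1)^k C(n,k) φ(k;n) g(k) for all n, then g(n) = ∑_{k=0}^{n} (-1)^k C(n,k) (a_k + k b_k)/φ(n;k+1) f(k) for all n, and conversely. -/
open Finset

/-- φ(x;n) = ∏_{k=0}^{n-1} (a_k + x b_k). -/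
noncomputable def ghPhi (a b : ℕ → ℂ) (x : ℂ) (n : ℕ) : ℂ :=
  ∏ k ∈ Finset.range n, (a k + x * b k)

lemma ghPhi_succ (a b : ℕ → ℂ) (x : ℂ) (n : ℕ) :
    ghPhi a b x (n + 1) = ghPhi a b x n * (a n + x * b n) := Finset.prod_range_succ _ _

lemma ghPhi_zero (a b : ℕ → ℂ) (x : ℂ) : ghPhi a b x 0 = 1 := rfl

lemma ghPhi_one (a b : ℕ → ℂ) (x : ℂ) : ghPhi a b x 1 = a 0 + x * b 0 :=
  Finset.prod_range_one _

lemma gh_nat_id (n k j : ℕ) :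
    (k + 1 - j) * (n.choose (k+1) * (k+1).choose j) = (n - k) * (n.choose k * k.choose j) := by
  calc (k + 1 - j) * (n.choose (k+1) * (k+1).choose j)
      = n.choose (k+1) * ((k+1).choose j * (k + 1 - j)) := by ring
    _ = n.choose (k+1) * (k.choose j * (k+1)) := by rw [← Nat.choose_mul_succ_eq]
    _ = (n.choose (k+1) * (k+1)) * k.choose j := by ring
    _ = (n.choose k * (n - k)) * k.choose j := by rw [Nat.choose_succ_right_eq]
    _ = _ := by rw [Nat.mul_comm (n.choose k) (n-k), Nat.mul_assoc]

lemma gh_cast_id (n k j : ℕ) (hk : k < n) (hj : j ≤ k + 1) :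
    ((k:ℂ) + 1 - j) * ((n.choose (k+1) : ℂ) * ((k+1).choose j : ℂ))
      = ((n:ℂ) - k) * ((n.choose k : ℂ) * (k.choose j : ℂ)) := by
  have h := congrArg (Nat.cast (R := ℂ)) (gh_nat_id n k j)
  push_cast [Nat.cast_sub hj, Nat.cast_sub hk.le] at h
  linear_combination h

lemma gh_step (A B P Q nn jj mm Cn Ck cn ck : ℂ) (hP : P ≠ 0) (hA : A + nn * B ≠ 0)
    (hid : (mm + 1 - jj) * (Cn * Ck) = (nn - mm) * (cn * ck)) (j m : ℕ) :
    (nn - jj) * ((-1)^(m+1) * Cn * (A + (mm + 1) * B) / (P * (A + nn * B)) * ((-1)^j * Ck * Q))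
      = (-1)^(m+1+j) * Cn * Ck * (nn - (mm+1)) * (Q * (A + jj * B)) / (P * (A + nn * B))
        - (-1)^(m+j) * cn * ck * (nn - mm) * Q / P := by
  have hD : P * (A + nn * B) ≠ 0 := mul_ne_zero hP hA
  have hz : (-1:ℂ)^(m+j) * cn * ck * (nn - mm) * Q / P
      = (-1:ℂ)^(m+j) * cn * ck * (nn - mm) * Q * (A + nn * B) / (P * (A + nn * B)) := by
    rw [mul_div_mul_right _ _ hA]
  have hl : (nn - jj) * ((-1:ℂ)^(m+1) * Cn * (A + (mm + 1) * B) / (P * (A + nn * B)) * ((-1)^j * Ck * Q))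
      = ((nn - jj) * ((-1)^(m+1) * Cn * (A + (mm + 1) * B)) * ((-1)^j * Ck * Q)) / (P * (A + nn * B)) := by
    ring
  rw [hz, hl, div_sub_div_same]
  have hnum : ((nn - jj) * ((-1:ℂ)^(m+1) * Cn * (A + (mm + 1) * B)) * ((-1)^j * Ck * Q))
      = (-1)^(m+1+j) * Cn * Ck * (nn - (mm+1)) * (Q * (A + jj * B))
        - (-1)^(m+j) * cn * ck * (nn - mm) * Q * (A + nn * B) := by
    linear_combination -(-(1:ℂ))^(m+j) * Q * (A + nn * B) * hid
  rw [hnum]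

lemma gh_orth (a b : ℕ → ℂ) (hphi : ∀ x n : ℕ, ghPhi a b (x : ℂ) n ≠ 0)
    (n j : ℕ) (hj : j ≤ n) :
    ∑ k ∈ Finset.range (n + 1),
      ((-1) ^ k * (n.choose k : ℂ) * (a k + (k : ℂ) * b k) / ghPhi a b (n : ℂ) (k + 1))
        * ((-1) ^ j * (k.choose j : ℂ) * ghPhi a b (j : ℂ) k)
      = if j = n then 1 else 0 := by
  rcases eq_or_lt_of_le hj with rfl | hjn
  · rw [if_pos rfl, Finset.sum_range_succ]
    have h0 : ∑ k ∈ Finset.range j,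
        ((-1) ^ k * (j.choose k : ℂ) * (a k + (k : ℂ) * b k) / ghPhi a b (j : ℂ) (k + 1))
          * ((-1) ^ j * (k.choose j : ℂ) * ghPhi a b (j : ℂ) k) = 0 := by
      refine Finset.sum_eq_zero fun k hk => ?_
      rw [Nat.choose_eq_zero_of_lt (Finset.mem_range.mp hk)]
      simp
    rw [h0, zero_add, Nat.choose_self]
    have hrec := ghPhi_succ a b (j:ℂ) j
    have hne := hphi j (j+1)
    have hP : ghPhi a b (j:ℂ) j ≠ 0 := hphi j j
    have hA : a j + (j:ℂ) * b j ≠ 0 := by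
      intro h; apply hne; rw [hrec, h, mul_zero]
    have h1 : ((-1:ℂ))^j * (-1)^j = 1 := by rw [← mul_pow]; norm_num
    rw [hrec]
    field_simp
    linear_combination h1
  · rw [if_neg hjn.ne]
    set u : ℕ → ℂ := fun k => (-1)^(k+j) * (n.choose k : ℂ) * (k.choose j : ℂ)
      * ((n:ℂ) - k) * ghPhi a b (j:ℂ) (k+1) / ghPhi a b (n:ℂ) (k+1) with hu
    set U : ℕ → ℂ := fun k => match k with | 0 => 0 | m+1 => u m with hU
    have key : ∀ k ∈ Finset.range (n+1),
        ((n:ℂ) - j) * (((-1) ^ k * (n.choose k : ℂ) * (a k + (k : ℂ) * b k)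
            / ghPhi a b (n : ℂ) (k + 1))
          * ((-1) ^ j * (k.choose j : ℂ) * ghPhi a b (j : ℂ) k)) = U (k+1) - U k := by
      intro k hk
      have hkn : k ≤ n := Nat.lt_succ_iff.mp (Finset.mem_range.mp hk)
      match k with
      | 0 =>
        show _ = u 0 - 0
        rcases Nat.eq_zero_or_pos j with rfl | hj0
        · simp only [hu]
          norm_num [ghPhi_one, ghPhi_zero]
          ring
        · simp [hu, Nat.choose_eq_zero_of_lt hj0]
      | m+1 =>
        show _ = u (m+1) - u m
        by_cases hjm : j ≤ m + 1
        · have hm : m < n := lt_of_lt_of_le (Nat.lt_succ_self m) hkn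
          have hid := gh_cast_id n m j hm hjm
          have hP : ghPhi a b (n:ℂ) (m+1) ≠ 0 := hphi n (m+1)
          have hrecn := ghPhi_succ a b (n:ℂ) (m+1)
          have hrecj := ghPhi_succ a b (j:ℂ) (m+1)
          have hA : a (m+1) + (n:ℂ) * b (m+1) ≠ 0 := by
            intro h; apply hphi n (m+2); rw [hrecn, h, mul_zero]
          simp only [hu]
          rw [hrecn, hrecj]
          push_cast
          exact gh_step (a (m+1)) (b (m+1)) (ghPhi a b (n:ℂ) (m+1)) (ghPhi a b (j:ℂ) (m+1))
            (n:ℂ) (j:ℂ) (m:ℂ) (n.choose (m+1) : ℂ) ((m+1).choose j : ℂ)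
            (n.choose m : ℂ) (m.choose j : ℂ) hP hA hid j m
        · have h1 : (m+1).choose j = 0 := Nat.choose_eq_zero_of_lt (not_le.mp hjm)
          have h2 : m.choose j = 0 := Nat.choose_eq_zero_of_lt (by omega)
          simp [hu, h1, h2]
    have hsum := Finset.sum_congr rfl key
    rw [Finset.sum_range_sub U (n+1)] at hsum
    have hUn : U (n+1) - U 0 = 0 := by
      show u n - 0 = 0
      simp [hu]
    rw [hUn, ← Finset.mul_sum] at hsum
    have hnj : (n:ℂ) - j ≠ 0 := by
      intro h
      have : (n:ℂ) = j := by linear_combination h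
      exact hjn.ne' (Nat.cast_injective this)
    exact (mul_eq_zero.mp hsum).resolve_left hnj

lemma gh_forward (a b : ℕ → ℂ)
    (hphi : ∀ x n : ℕ, ghPhi a b (x : ℂ) n ≠ 0) (f g : ℕ → ℂ)
    (hf : ∀ n : ℕ, f n = ∑ k ∈ Finset.range (n + 1),
        (-1) ^ k * (n.choose k : ℂ) * ghPhi a b (k : ℂ) n * g k) :
    ∀ n : ℕ, g n = ∑ k ∈ Finset.range (n + 1),
        (-1) ^ k * (n.choose k : ℂ) * (a k + (k : ℂ) * b k) / ghPhi a b (n : ℂ) (k + 1) * f k := by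
  intro n
  refine Eq.symm ?_
  calc ∑ k ∈ Finset.range (n + 1),
        (-1) ^ k * (n.choose k : ℂ) * (a k + (k : ℂ) * b k) / ghPhi a b (n : ℂ) (k + 1) * f k
      = ∑ k ∈ Finset.range (n + 1), ∑ j ∈ Finset.range (n + 1),
          ((-1) ^ k * (n.choose k : ℂ) * (a k + (k : ℂ) * b k) / ghPhi a b (n : ℂ) (k + 1))
            * ((-1) ^ j * (k.choose j : ℂ) * ghPhi a b (j : ℂ) k * g j) := by
        refine Finset.sum_congr rfl fun k hk => ?_
        rw [hf k, Finset.mul_sum]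
        refine Finset.sum_subset
          (Finset.range_subset_range.mpr (Nat.succ_le_succ (Nat.lt_succ_iff.mp (Finset.mem_range.mp hk))))
          fun j _ hj' => ?_
        have hkj : k < j := Nat.lt_of_succ_le (le_of_not_gt fun h => hj' (Finset.mem_range.mpr h))
        rw [Nat.choose_eq_zero_of_lt hkj]
        simp
      _ = ∑ j ∈ Finset.range (n + 1), ∑ k ∈ Finset.range (n + 1),
          ((-1) ^ k * (n.choose k : ℂ) * (a k + (k : ℂ) * b k) / ghPhi a b (n : ℂ) (k + 1))
            * ((-1) ^ j * (k.choose j : ℂ) * ghPhi a b (j : ℂ) k * g j) := Finset.sum_comm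
      _ = ∑ j ∈ Finset.range (n + 1), (∑ k ∈ Finset.range (n + 1),
          ((-1) ^ k * (n.choose k : ℂ) * (a k + (k : ℂ) * b k) / ghPhi a b (n : ℂ) (k + 1))
            * ((-1) ^ j * (k.choose j : ℂ) * ghPhi a b (j : ℂ) k)) * g j := by
        refine Finset.sum_congr rfl fun j _ => ?_
        rw [Finset.sum_mul]
        exact Finset.sum_congr rfl fun k _ => by ring
      _ = ∑ j ∈ Finset.range (n + 1), (if j = n then 1 else 0) * g j := by
        refine Finset.sum_congr rfl fun j hj => ?_
        rw [gh_orth a b hphi n j (Nat.lt_succ_iff.mp (Finset.mem_range.mp hj))]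
      _ = g n := by
        rw [Finset.sum_eq_single n (fun j _ hj => by rw [if_neg hj, zero_mul])
          (fun h => absurd (Finset.self_mem_range_succ n) h)]
        rw [if_pos rfl, one_mul]

theorem gould_hsu_inversion (a b : ℕ → ℂ)
    (hphi : ∀ x n : ℕ, ghPhi a b (x : ℂ) n ≠ 0) (f g : ℕ → ℂ) :
    (∀ n : ℕ, f n = ∑ k ∈ Finset.range (n + 1),
        (-1) ^ k * (n.choose k : ℂ) * ghPhi a b (k : ℂ) n * g k)
      ↔
    (∀ n : ℕ, g n = ∑ k ∈ Finset.range (n + 1),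
        (-1) ^ k * (n.choose k : ℂ) * (a k + (k : ℂ) * b k) / ghPhi a b (n : ℂ) (k + 1) * f k) := by
  constructor
  · exact gh_forward a b hphi f g
  · intro hg
    set f' : ℕ → ℂ := fun m => ∑ j ∈ Finset.range (m + 1),
      (-1) ^ j * (m.choose j : ℂ) * ghPhi a b (j : ℂ) m * g j with hf'
    have h2 := gh_forward a b hphi f' g (fun m => rfl)
    have heq : ∀ m, f m = f' m := by
      intro m
      induction m using Nat.strong_induction_on with
      | _ m ih =>
        have e : ∑ k ∈ Finset.range (m + 1),
            (-1) ^ k * (m.choose k : ℂ) * (a k + (k : ℂ) * b k) / ghPhi a b (m : ℂ) (k + 1) * f k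
          = ∑ k ∈ Finset.range (m + 1),
            (-1) ^ k * (m.choose k : ℂ) * (a k + (k : ℂ) * b k) / ghPhi a b (m : ℂ) (k + 1) * f' k :=
          (hg m).symm.trans (h2 m)
        rw [Finset.sum_range_succ, Finset.sum_range_succ] at e
        have e' : ∑ k ∈ Finset.range m,
            (-1) ^ k * (m.choose k : ℂ) * (a k + (k : ℂ) * b k) / ghPhi a b (m : ℂ) (k + 1) * f k
          = ∑ k ∈ Finset.range m,
            (-1) ^ k * (m.choose k : ℂ) * (a k + (k : ℂ) * b k) / ghPhi a b (m : ℂ) (k + 1) * f' k :=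
          Finset.sum_congr rfl fun k hk => by rw [ih k (Finset.mem_range.mp hk)]
        rw [e'] at e
        have e2 := add_left_cancel e
        have hc : (-1 : ℂ) ^ m * (m.choose m : ℂ) * (a m + (m : ℂ) * b m)
            / ghPhi a b (m : ℂ) (m + 1) ≠ 0 := by
          have hA : a m + (m:ℂ) * b m ≠ 0 := by
            intro h; apply hphi m (m+1); rw [ghPhi_succ, h, mul_zero]
          apply div_ne_zero _ (hphi m (m+1))
          simp [Nat.choose_self, hA, pow_ne_zero]
        exact mul_left_cancel₀ hc e2
    intro n
    exact (heq n).trans rfl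
end

section
/- (Carlitz q-analogue of Gould–Hsu inversions) Let q be a nonzero complex number with the Gaussian binomial coefficients well defined, and let {a_i},{b_i} be complex sequences such that φ(x;0)=1 and φ(x;n)=∏_{k=0}^{n-1}(a_k + x b_k) are nonzero for x = q^{-m}, m,n ∈ ℕ₀. If f(n) = ∑_{k=0}^n (-1)^k [n,k]_q φ(q^{-k};n) g(k) for all n, then g(n) = ∑_{k=0}^n (-1)^k [n,k]_q q^{C(n-k,2)} (a_k + q^{-k} b_k)/φ(q^{-n};k+1) f(k) for all n, and conversely. -/
open Finset

/-- q-shifted factorial (x;q)_n = ∏_{j=0}^{n-1} (1 - x q^j). -/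
noncomputable def qPoch (x q : ℂ) (n : ℕ) : ℂ :=
  ∏ j ∈ Finset.range n, (1 - x * q ^ j)

/-- Gaussian binomial coefficient [n,k]_q. -/
noncomputable def qBinom (q : ℂ) (n k : ℕ) : ℂ :=
  qPoch q q n / (qPoch q q k * qPoch q q (n - k))

/-- φ(x;n) = ∏_{k=0}^{1} (a_k + x b_k). -/
noncomputable def carlitzPhi (a b : ℕ → ℂ) (x : ℂ) (n : ℕ) : ℂ :=
  ∏ k ∈ Finset.range n, (a k + x * b k)

namespace CarlitzAux

noncomputable def Amat (q : ℂ) (a b : ℕ → ℂ) (n k : ℕ) : ℂ :=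
  (-1) ^ k * qBinom q n k * carlitzPhi a b (q ^ (-(k : ℤ))) n

noncomputable def Bmat (q : ℂ) (a b : ℕ → ℂ) (n k : ℕ) : ℂ :=
  (-1) ^ k * qBinom q n k * q ^ ((n - k).choose 2) *
    (a k + q ^ (-(k : ℤ)) * b k) / carlitzPhi a b (q ^ (-(n : ℤ))) (k + 1)

lemma qPoch_zero (x q : ℂ) : qPoch x q 0 = 1 := by simp [qPoch]

lemma qPoch_succ (x q : ℂ) (n : ℕ) :
    qPoch x q (n + 1) = qPoch x q n * (1 - x * q ^ n) := by
  simp [qPoch, Finset.prod_range_succ]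

lemma carlitzPhi_succ (a b : ℕ → ℂ) (x : ℂ) (n : ℕ) :
    carlitzPhi a b x (n + 1) = carlitzPhi a b x n * (a n + x * b n) := by
  simp [carlitzPhi, Finset.prod_range_succ]

lemma carlitzPhi_split (a b : ℕ → ℂ) (x : ℂ) {k n : ℕ} (h : k ≤ n) :
    carlitzPhi a b x n = carlitzPhi a b x k * ∏ t ∈ Ico k n, (a t + x * b t) := by
  unfold carlitzPhi
  rw [Finset.range_eq_Ico, Finset.range_eq_Ico]
  exact (Finset.prod_Ico_consecutive (fun t => a t + x * b t) (Nat.zero_le k) h).symm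

variable {q : ℂ}

lemma factor_ne (hqq : ∀ n, qPoch q q n ≠ 0) (n : ℕ) : (1 : ℂ) - q * q ^ n ≠ 0 := by
  have := hqq (n + 1)
  rw [qPoch_succ] at this
  exact right_ne_zero_of_mul this

lemma qBinom_self (hqq : ∀ n, qPoch q q n ≠ 0) (n : ℕ) : qBinom q n n = 1 := by
  simp [qBinom, qPoch_zero, div_self (hqq n)]

lemma qBinom_zero (hqq : ∀ n, qPoch q q n ≠ 0) (n : ℕ) : qBinom q n 0 = 1 := by
  simp [qBinom, qPoch_zero, div_self (hqq n)]

lemma pascal (hqq : ∀ n, qPoch q q n ≠ 0) (i t : ℕ) :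
    qBinom q (i + t + 2) (i + 1) =
      qBinom q (i + t + 1) (i + 1) + q ^ (t + 1) * qBinom q (i + t + 1) i := by
  have h1 : i + t + 2 - (i + 1) = t + 1 := by omega
  have h2 : i + t + 1 - (i + 1) = t := by omega
  have h3 : i + t + 1 - i = t + 1 := by omega
  simp only [qBinom, h1, h2, h3]
  rw [show i + t + 2 = (i + t + 1) + 1 from rfl, qPoch_succ q q (i + t + 1),
    qPoch_succ q q i, qPoch_succ q q t]
  field_simp [hqq i, hqq t, hqq (i + t + 1), factor_ne hqq i, factor_ne hqq t,
    factor_ne hqq (i + t + 1)]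
  ring

lemma trinomial (hqq : ∀ n, qPoch q q n ≠ 0) (k s t : ℕ) :
    qBinom q (k + s + t) (k + s) * qBinom q (k + s) k =
      qBinom q (k + s + t) k * qBinom q (s + t) s := by
  have h1 : k + s + t - (k + s) = t := by omega
  have h2 : k + s - k = s := by omega
  have h3 : k + s + t - k = s + t := by omega
  have h4 : s + t - s = t := by omega
  simp only [qBinom, h1, h2, h3, h4]
  field_simp [hqq k, hqq s, hqq t, hqq (k + s), hqq (s + t), hqq (k + s + t)]

lemma gauss (hqq : ∀ n, qPoch q q n ≠ 0) (m : ℕ) (z : ℂ) :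
    ∑ i ∈ range (m + 1), (-1) ^ i * qBinom q m i * q ^ (i.choose 2) * z ^ i =
      ∏ j ∈ range m, (1 - z * q ^ j) := by
  induction m generalizing z with
  | zero => simp [qBinom_self hqq 0]
  | succ m ih =>
    rw [prod_range_succ, ← ih z]
    rw [Finset.sum_range_succ (fun i => (-1) ^ i * qBinom q (m + 1) i * q ^ (i.choose 2) * z ^ i)]
    rw [Finset.sum_range_succ' (fun i => (-1) ^ i * qBinom q (m + 1) i * q ^ (i.choose 2) * z ^ i)]
    rw [mul_one_sub, Finset.sum_mul,
      Finset.sum_range_succ (fun i => (-1) ^ i * qBinom q m i * q ^ (i.choose 2) * z ^ i * (z * q ^ m))]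
    rw [Finset.sum_range_succ' (fun i => (-1) ^ i * qBinom q m i * q ^ (i.choose 2) * z ^ i)]
    have hmid : ∀ i ∈ range m,
        (-1) ^ (i + 1) * qBinom q (m + 1) (i + 1) * q ^ ((i + 1).choose 2) * z ^ (i + 1) =
          (-1) ^ (i + 1) * qBinom q m (i + 1) * q ^ ((i + 1).choose 2) * z ^ (i + 1) -
            (-1) ^ i * qBinom q m i * q ^ (i.choose 2) * z ^ i * (z * q ^ m) := by
      intro i hi
      have hi' := Finset.mem_range.mp hi
      obtain ⟨t, ht⟩ : ∃ t, m = i + t + 1 := ⟨m - i - 1, by omega⟩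
      subst ht
      rw [show i + t + 1 + 1 = i + t + 2 from rfl, pascal hqq i t]
      have hch : (i + 1).choose 2 = i.choose 2 + i := by
        have h := Nat.choose_succ_succ' i 1
        norm_num [Nat.choose_one_right] at h
        omega
      rw [hch]
      ring
    rw [Finset.sum_congr rfl hmid, Finset.sum_sub_distrib]
    have hlast : (-1 : ℂ) ^ (m + 1) * qBinom q (m + 1) (m + 1) * q ^ ((m + 1).choose 2) * z ^ (m + 1) =
        -((-1) ^ m * qBinom q m m * q ^ (m.choose 2) * z ^ m * (z * q ^ m)) := by
      rw [qBinom_self hqq, qBinom_self hqq]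
      have : (m + 1).choose 2 = m.choose 2 + m := by
        have h := Nat.choose_succ_succ' m 1
        norm_num [Nat.choose_one_right] at h
        omega
      rw [this]
      ring
    rw [hlast]
    have hz : (-1 : ℂ) ^ 0 * qBinom q (m + 1) 0 * q ^ (Nat.choose 0 2) * z ^ 0 =
        (-1) ^ 0 * qBinom q m 0 * q ^ (Nat.choose 0 2) * z ^ 0 := by
      rw [qBinom_zero hqq, qBinom_zero hqq]
    rw [hz]
    ring

lemma annihilate (hq : q ≠ 0) (hqq : ∀ n, qPoch q q n ≠ 0) (m : ℕ) (T : Finset ℕ)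
    (hT : T.card < m) (u v : ℕ → ℂ) :
    ∑ i ∈ range (m + 1), (-1) ^ i * qBinom q m i * q ^ (i.choose 2) *
      ∏ t ∈ T, (u t + (q⁻¹) ^ i * v t) = 0 := by
  have expand : ∀ i : ℕ, (∏ t ∈ T, (u t + (q⁻¹) ^ i * v t)) =
      ∑ S ∈ T.powerset, (∏ t ∈ S, u t) * (∏ t ∈ T \ S, v t) * ((q⁻¹) ^ (T \ S).card) ^ i := by
    intro i
    rw [Finset.prod_add]
    refine Finset.sum_congr rfl fun S hS => ?_
    rw [Finset.prod_mul_distrib, Finset.prod_const, ← pow_mul, ← pow_mul, Nat.mul_comm]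
    ring
  simp only [expand, Finset.mul_sum]
  rw [Finset.sum_comm]
  refine Finset.sum_eq_zero fun S hS => ?_
  have hcard : (T \ S).card < m :=
    lt_of_le_of_lt (Finset.card_le_card (Finset.sdiff_subset)) hT
  have : ∑ i ∈ range (m + 1), (-1) ^ i * qBinom q m i * q ^ (i.choose 2) *
      ((∏ t ∈ S, u t) * (∏ t ∈ T \ S, v t) * ((q⁻¹) ^ (T \ S).card) ^ i) =
      ((∏ t ∈ S, u t) * (∏ t ∈ T \ S, v t)) *
        ∑ i ∈ range (m + 1), (-1) ^ i * qBinom q m i * q ^ (i.choose 2) *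
          ((q⁻¹) ^ (T \ S).card) ^ i := by
    rw [Finset.mul_sum]; exact Finset.sum_congr rfl fun i _ => by ring
  rw [this, gauss hqq]
  rw [Finset.prod_eq_zero (Finset.mem_range.mpr hcard)
    (by rw [← mul_pow, inv_mul_cancel₀ hq, one_pow, sub_self])]
  rw [mul_zero]

lemma neg_one_sq_pow (k : ℕ) : ((-1 : ℂ)) ^ k * (-1) ^ k = 1 := by
  rw [← mul_pow]; norm_num

lemma zpow_neg_add (hq : q ≠ 0) (k i : ℕ) :
    q ^ (-((k + i : ℕ) : ℤ)) = (q⁻¹) ^ i * q ^ (-(k : ℤ)) := by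
  have h : (-((k + i : ℕ) : ℤ)) = (-(i : ℤ)) + (-(k : ℤ)) := by push_cast; ring
  rw [h, zpow_add₀ hq]
  congr 1
  rw [zpow_neg, zpow_natCast, inv_pow]

lemma term_eq (hq : q ≠ 0) (hqq : ∀ n, qPoch q q n ≠ 0) (a b : ℕ → ℂ)
    (hphi : ∀ m n : ℕ, carlitzPhi a b (q ^ (-(m : ℤ))) n ≠ 0)
    (k d i : ℕ) (hi : i ≤ d + 1) :
    Amat q a b (k + d + 1) (k + i) * Bmat q a b (k + i) k
      = (qBinom q (k + d + 1) k * (a k + q ^ (-(k : ℤ)) * b k)) *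
        ((-1 : ℂ) ^ i * qBinom q (d + 1) i * q ^ (i.choose 2) *
          ∏ t ∈ Ico (k + 1) (k + d + 1), (a t + (q⁻¹) ^ i * (q ^ (-(k : ℤ)) * b t))) := by
  unfold Amat Bmat
  have hsub : k + i - k = i := by omega
  rw [hsub]
  rw [carlitzPhi_split a b (q ^ (-((k + i : ℕ) : ℤ))) (show k + 1 ≤ k + d + 1 by omega)]
  have hΦ : carlitzPhi a b (q ^ (-((k + i : ℕ) : ℤ))) (k + 1) ≠ 0 := hphi (k + i) (k + 1)
  have htri : qBinom q (k + d + 1) (k + i) * qBinom q (k + i) k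
      = qBinom q (k + d + 1) k * qBinom q (d + 1) i := by
    have h := trinomial hqq k i (d + 1 - i)
    rw [show k + i + (d + 1 - i) = k + d + 1 by omega,
      show i + (d + 1 - i) = d + 1 by omega] at h
    exact h
  rw [Finset.prod_congr rfl (fun t _ => by
    rw [zpow_neg_add hq, mul_assoc] :
    ∀ t ∈ Ico (k + 1) (k + d + 1),
      a t + q ^ (-((k + i : ℕ) : ℤ)) * b t = a t + (q⁻¹) ^ i * (q ^ (-(k : ℤ)) * b t))]
  have hcan : ∀ X Y P s Φ : ℂ, Φ ≠ 0 →
      (X * (Φ * P)) * (Y * s / Φ) = (X * P) * (Y * s) := by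
    intro X Y P s Φ hΦ
    rw [div_eq_mul_inv]
    calc (X * (Φ * P)) * (Y * s * Φ⁻¹) = (X * P) * (Y * s) * (Φ * Φ⁻¹) := by ring
      _ = (X * P) * (Y * s) := by rw [mul_inv_cancel₀ hΦ, mul_one]
  rw [hcan _ _ _ _ _ hΦ]
  rw [pow_add]
  linear_combination
    ((-1 : ℂ) ^ i * q ^ (i.choose 2) *
      (∏ t ∈ Ico (k + 1) (k + d + 1), (a t + (q⁻¹) ^ i * (q ^ (-(k : ℤ)) * b t))) *
      (a k + q ^ (-(k : ℤ)) * b k) * ((-1 : ℂ) ^ k * (-1) ^ k)) * htri +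
    ((-1 : ℂ) ^ i * q ^ (i.choose 2) *
      (∏ t ∈ Ico (k + 1) (k + d + 1), (a t + (q⁻¹) ^ i * (q ^ (-(k : ℤ)) * b t))) *
      (a k + q ^ (-(k : ℤ)) * b k) * (qBinom q (k + d + 1) k * qBinom q (d + 1) i)) *
      (neg_one_sq_pow k)

lemma ortho (hq : q ≠ 0) (hqq : ∀ n, qPoch q q n ≠ 0) (a b : ℕ → ℂ)
    (hphi : ∀ m n : ℕ, carlitzPhi a b (q ^ (-(m : ℤ))) n ≠ 0)
    {k n : ℕ} (hkn : k ≤ n) :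
    ∑ j ∈ Icc k n, Amat q a b n j * Bmat q a b j k = if n = k then 1 else 0 := by
  rcases hkn.eq_or_lt with rfl | hlt
  · rw [Finset.Icc_self, Finset.sum_singleton, if_pos rfl]
    unfold Amat Bmat
    rw [qBinom_self hqq, Nat.sub_self]
    have hne := hphi k (k + 1)
    rw [carlitzPhi_succ] at hne ⊢
    obtain ⟨h2, h3⟩ := mul_ne_zero_iff.mp hne
    have key : ∀ c Φ s : ℂ, Φ ≠ 0 → s ≠ 0 → c * c = 1 →
        (c * 1 * Φ) * (c * 1 * q ^ Nat.choose 0 2 * s / (Φ * s)) = 1 := by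
      intro c Φ s hΦ hs hc
      rw [show Nat.choose 0 2 = 0 from rfl, pow_zero, div_eq_mul_inv]
      calc (c * 1 * Φ) * (c * 1 * 1 * s * (Φ * s)⁻¹)
          = (c * c) * ((Φ * s) * (Φ * s)⁻¹) := by ring
        _ = 1 := by rw [hc, mul_inv_cancel₀ (mul_ne_zero hΦ hs), mul_one]
    exact key _ _ _ h2 h3 (neg_one_sq_pow k)
  · obtain ⟨d, rfl⟩ : ∃ d, n = k + d + 1 := ⟨n - k - 1, by omega⟩
    rw [if_neg (by omega)]
    rw [← Finset.Ico_add_one_right_eq_Icc, Finset.sum_Ico_eq_sum_range]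
    rw [show k + d + 1 + 1 - k = d + 2 by omega]
    rw [Finset.sum_congr rfl (fun i hi =>
      term_eq hq hqq a b hphi k d i (by have := Finset.mem_range.mp hi; omega))]
    rw [← Finset.mul_sum]
    rw [annihilate hq hqq (d + 1) (Ico (k + 1) (k + d + 1))
      (by rw [Nat.card_Ico]; omega) a (fun t => q ^ (-(k : ℤ)) * b t), mul_zero]

lemma AB_eq (hq : q ≠ 0) (hqq : ∀ n, qPoch q q n ≠ 0) (a b : ℕ → ℂ)
    (hphi : ∀ m n : ℕ, carlitzPhi a b (q ^ (-(m : ℤ))) n ≠ 0) (f : ℕ → ℂ) (n : ℕ) :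
    ∑ k ∈ range (n + 1), Amat q a b n k * ∑ j ∈ range (k + 1), Bmat q a b k j * f j
      = f n := by
  have step1 : ∀ k, Amat q a b n k * ∑ j ∈ range (k + 1), Bmat q a b k j * f j
      = ∑ j ∈ Ico 0 (k + 1), Amat q a b n k * Bmat q a b k j * f j := by
    intro k
    rw [← Finset.range_eq_Ico, Finset.mul_sum]
    exact Finset.sum_congr rfl fun j _ => by ring
  rw [Finset.sum_congr rfl fun k _ => step1 k, Finset.range_eq_Ico,
    ← Finset.sum_Ico_Ico_comm 0 (n + 1) (fun j k => Amat q a b n k * Bmat q a b k j * f j)]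
  have step2 : ∀ j ∈ Ico 0 (n + 1),
      ∑ k ∈ Ico j (n + 1), Amat q a b n k * Bmat q a b k j * f j
        = (if n = j then 1 else 0) * f j := by
    intro j hj
    rw [Finset.Ico_add_one_right_eq_Icc, ← Finset.sum_mul]
    rw [ortho hq hqq a b hphi (Nat.lt_succ_iff.mp (Finset.mem_Ico.mp hj).2)]
  rw [Finset.sum_congr rfl step2]
  simp

lemma uniq (A : ℕ → ℕ → ℂ) (hA : ∀ n, A n n ≠ 0) (v w : ℕ → ℂ)
    (h : ∀ n, ∑ k ∈ range (n + 1), A n k * v k = ∑ k ∈ range (n + 1), A n k * w k) :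
    ∀ n, v n = w n := by
  intro n
  induction n using Nat.strong_induction_on with
  | _ n ih =>
    have hn := h n
    have hsum : ∑ k ∈ range n, A n k * v k = ∑ k ∈ range n, A n k * w k :=
      Finset.sum_congr rfl fun k hk => by rw [ih k (Finset.mem_range.mp hk)]
    rw [Finset.sum_range_succ, Finset.sum_range_succ, hsum] at hn
    exact mul_left_cancel₀ (hA n) (add_left_cancel hn)

end CarlitzAux

theorem carlitz_inversion (q : ℂ) (hq : q ≠ 0)
    (hqq : ∀ n : ℕ, qPoch q q n ≠ 0) (a b : ℕ → ℂ)
    (hphi : ∀ m n : ℕ, carlitzPhi a b (q ^ (-(m : ℤ))) n ≠ 0) (f g : ℕ → ℂ) :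
    (∀ n : ℕ, f n = ∑ k ∈ Finset.range (n + 1),
        (-1) ^ k * qBinom q n k * carlitzPhi a b (q ^ (-(k : ℤ))) n * g k)
      ↔
    (∀ n : ℕ, g n = ∑ k ∈ Finset.range (n + 1),
        (-1) ^ k * qBinom q n k * q ^ ((n - k).choose 2) *
          (a k + q ^ (-(k : ℤ)) * b k) / carlitzPhi a b (q ^ (-(n : ℤ))) (k + 1) * f k) := by
  show (∀ n : ℕ, f n = ∑ k ∈ Finset.range (n + 1), CarlitzAux.Amat q a b n k * g k) ↔
    (∀ n : ℕ, g n = ∑ k ∈ Finset.range (n + 1), CarlitzAux.Bmat q a b n k * f k)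
  have hAnn : ∀ n, CarlitzAux.Amat q a b n n ≠ 0 := by
    intro n
    unfold CarlitzAux.Amat
    rw [CarlitzAux.qBinom_self hqq]
    exact mul_ne_zero (by simp) (hphi n n)
  constructor
  · intro hf n
    exact CarlitzAux.uniq (CarlitzAux.Amat q a b) hAnn g
      (fun m => ∑ j ∈ Finset.range (m + 1), CarlitzAux.Bmat q a b m j * f j)
      (fun m => ((hf m).symm).trans (CarlitzAux.AB_eq hq hqq a b hphi f m).symm) n
  · intro hg n
    calc f n = ∑ k ∈ Finset.range (n + 1), CarlitzAux.Amat q a b n k *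
          ∑ j ∈ Finset.range (k + 1), CarlitzAux.Bmat q a b k j * f j :=
        (CarlitzAux.AB_eq hq hqq a b hphi f n).symm
      _ = ∑ k ∈ Finset.range (n + 1), CarlitzAux.Amat q a b n k * g k :=
        Finset.sum_congr rfl fun k _ => by rw [← hg k]
end
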